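/- Let R be a commutative ring and I an ideal with J(R) ⊆ I. If I is a nil clean ideal of R, then J(R) is nil and for every a ∈ I, a - a^2 ∈ J(R) (i.e., I/J(R) is Boolean). -/

import Mathlib

def IsNilCleanIdeal {R : Type*} [CommRing R] (I : Ideal R) : Prop :=
  ∀ x ∈ I, ∃ e n : R, IsIdempotentElem e ∧ IsNilpotent n ∧ x = e + n

lemma nilpotent_mem_jacobson {R : Type*} [CommRing R] {n : R} (hn : IsNilpotent n) :
    n ∈ (⊥ : Ideal R).jacobson :=
  Ideal.radical_le_jacobson (by simp only [Ideal.mem_radical_iff, Ideal.mem_bot]; exact hn)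

lemma idem_jacobson_eq_zero {R : Type*} [CommRing R] {e : R}
    (he : IsIdempotentElem e) (hmem : e ∈ (⊥ : Ideal R).jacobson) : e = 0 := by
  rw [Ideal.mem_jacobson_bot] at hmem
  have hu : IsUnit (e * (-1) + 1) := hmem (-1)
  obtain ⟨u, hu⟩ := hu
  have h0 : e * (e * (-1) + 1) = 0 := by
    have := he.eq
    ring_nf
    rw [← pow_two] at *
    rw [this]; ring
  calc e = e * (↑u * ↑u⁻¹) := by simp
    _ = (e * (e * (-1) + 1)) * ↑u⁻¹ := by rw [hu]; ring
    _ = 0 := by rw [h0]; simp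

/-- If `J(R) ⊆ I` and `I` is a nil clean ideal, then `J(R)` is nil and `I/J(R)` is Boolean. -/
theorem jacobson_nil_and_boolean_of_nilCleanIdeal {R : Type*} [CommRing R] (I : Ideal R)
    (hle : (⊥ : Ideal R).jacobson ≤ I) (h : IsNilCleanIdeal I) :
    (∀ x ∈ (⊥ : Ideal R).jacobson, IsNilpotent x) ∧
      ∀ a ∈ I, a - a ^ 2 ∈ (⊥ : Ideal R).jacobson := by
  constructor
  · intro x hx
    obtain ⟨e, n, he, hn, hxe⟩ := h x (hle hx)
    have hej : e ∈ (⊥ : Ideal R).jacobson := by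
      have : e = x - n := by rw [hxe]; ring
      rw [this]
      exact Submodule.sub_mem _ hx (nilpotent_mem_jacobson hn)
    have he0 : e = 0 := idem_jacobson_eq_zero he hej
    rw [hxe, he0, zero_add]
    exact hn
  · intro a ha
    obtain ⟨e, n, he, hn, hae⟩ := h a ha
    have key : a - a ^ 2 = n * (1 - 2 * e - n) := by
      rw [hae]
      have := he.eq
      rw [← pow_two] at this
      ring_nf
      rw [this]; ring
    rw [key]
    exact Ideal.mul_mem_right _ _ (nilpotent_mem_jacobson hn)
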